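/- arXiv:1602.00048 — 2 statements merged into one kernel-verified Lean document; each statement's English description precedes it below -/
import Mathlib

section
/- If $b(k+1)^2 \le b(k)^2 + G^2\alpha(k)^2 - 2\epsilon\alpha(k)$ for all $k > K$, where $b(k) \ge 0$, $G > 0$, $\epsilon > 0$, $\alpha(k) > 0$, $\alpha(k) \to 0$, and $\sum_k \alpha(k) = \infty$, then a contradiction follows (such a sequence $b$ cannot exist). -/
theorem stmt1 (α b : ℕ → ℝ) (G ε : ℝ) (K : ℕ)
    (hb : ∀ k, 0 ≤ b k)
    (hα : ∀ k, 0 < α k)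
    (hα0 : Filter.Tendsto α Filter.atTop (nhds 0))
    (hdiv : Filter.Tendsto (fun N => ∑ k ∈ Finset.range N, α k) Filter.atTop Filter.atTop)
    (hG : 0 < G) (hε : 0 < ε)
    (hrec : ∀ k, K < k → b (k + 1) ^ 2 ≤ b k ^ 2 + G ^ 2 * α k ^ 2 - 2 * ε * α k) :
    False := by
  have hsmall : ∀ᶠ k in Filter.atTop, α k < ε / G ^ 2 :=
    hα0.eventually_lt_const (by positivity)
  obtain ⟨N₀, hN₀⟩ := Filter.eventually_atTop.mp hsmall
  set N := max N₀ (K + 1) with hN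
  -- one-step decrease for k ≥ N
  have hstep : ∀ k, N ≤ k → b (k + 1) ^ 2 ≤ b k ^ 2 - ε * α k := by
    intro k hk
    have hk1 : K < k := lt_of_lt_of_le (Nat.lt_succ_self K) (le_trans (le_max_right _ _) hk)
    have h2 := hrec k hk1
    have h3 : α k < ε / G ^ 2 := hN₀ k (le_trans (le_max_left _ _) hk)
    have h4 : G ^ 2 * α k ≤ ε := by
      have := (lt_div_iff₀ (by positivity : (0:ℝ) < G ^ 2)).mp h3
      nlinarith
    nlinarith [hα k, sq_nonneg (α k)]
  -- key bound by induction
  have key : ∀ n, b (N + n) ^ 2 + ε * ∑ k ∈ Finset.Ico N (N + n), α k ≤ b N ^ 2 := by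
    intro n
    induction n with
    | zero => simp
    | succ n ih =>
      have h1 := hstep (N + n) (Nat.le_add_right _ _)
      rw [show N + (n + 1) = (N + n) + 1 from rfl,
        Finset.sum_Ico_succ_top (Nat.le_add_right _ _)]
      nlinarith
  -- so partial sums are bounded
  have hbound : ∀ M, N ≤ M → ∑ k ∈ Finset.range M, α k ≤ ∑ k ∈ Finset.range N, α k + b N ^ 2 / ε := by
    intro M hM
    obtain ⟨n, rfl⟩ := Nat.exists_eq_add_of_le hM
    have h1 := key n
    have h2 := hb (N + n)
    have h3 : ε * ∑ k ∈ Finset.Ico N (N + n), α k ≤ b N ^ 2 := by nlinarith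
    have h4 : ∑ k ∈ Finset.Ico N (N + n), α k ≤ b N ^ 2 / ε :=
      (le_div_iff₀' hε).mpr h3
    have h5 : ∑ k ∈ Finset.range (N + n), α k
        = ∑ k ∈ Finset.range N, α k + ∑ k ∈ Finset.Ico N (N + n), α k := by
      simp only [Finset.range_eq_Ico]
      exact (Finset.sum_Ico_consecutive _ (Nat.zero_le N) (Nat.le_add_right _ _)).symm
    linarith
  -- contradiction with divergence
  have := (hdiv.eventually_gt_atTop (∑ k ∈ Finset.range N, α k + b N ^ 2 / ε)).and
    (Filter.eventually_ge_atTop N)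
  obtain ⟨M, hM1, hM2⟩ := this.exists
  exact absurd (hbound M hM2) (not_le.mpr hM1)
end

section
/- Let $\alpha(k) > 0$ with $\alpha(k) \to 0$ and $\sum_k \alpha(k) = \infty$, and let $\phi : \mathbb{N} \to \mathbb{R}$ satisfy $\phi(k) \ge 0$ for all $k$ and $\phi(k+1) \le \phi(k) + G^2 \alpha(k)^2 - 2\alpha(k)\psi(k)$ with $\psi(k) \ge 0$. Then $\liminf_{k\to\infty} \psi(k) = 0$. -/
theorem stmt18 (α φ ψ : ℕ → ℝ) (G : ℝ) (hG : 0 < G)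
    (hα : ∀ k, 0 < α k)
    (hα0 : Filter.Tendsto α Filter.atTop (nhds 0))
    (hdiv : Filter.Tendsto (fun N => ∑ k ∈ Finset.range N, α k) Filter.atTop Filter.atTop)
    (hφ : ∀ k, 0 ≤ φ k) (hψ : ∀ k, 0 ≤ ψ k)
    (hrec : ∀ k, φ (k + 1) ≤ φ k + G ^ 2 * α k ^ 2 - 2 * α k * ψ k) :
    Filter.liminf ψ Filter.atTop = 0 := by
  have key : ∀ ε : ℝ, 0 < ε → ∃ᶠ k in Filter.atTop, ψ k ≤ ε := by
    intro ε hε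
    by_contra h
    rw [Filter.not_frequently] at h
    simp only [Filter.eventually_atTop, not_le] at h
    obtain ⟨K, hK⟩ := h
    have hsmall : ∀ᶠ k in Filter.atTop, α k < ε / G ^ 2 :=
      hα0.eventually_lt_const (by positivity)
    obtain ⟨K', hK'⟩ := Filter.eventually_atTop.mp hsmall
    set M := max K K' with hM
    have step : ∀ k, M ≤ k → φ (k + 1) ≤ φ k - ε * α k := by
      intro k hk
      have h1 := hrec k
      have h2 : ε < ψ k := hK k (le_trans (le_max_left _ _) hk)
      have h3 : α k < ε / G ^ 2 := hK' k (le_trans (le_max_right _ _) hk)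
      have h4 : G ^ 2 * α k < ε := by
        rw [div_eq_inv_mul] at h3
        calc G ^ 2 * α k < G ^ 2 * ((G ^ 2)⁻¹ * ε) := by
              apply mul_lt_mul_of_pos_left _ (by positivity)
              linarith [h3]
          _ = ε := by field_simp
      nlinarith [hα k, mul_pos (hα k) hε]
    have sum : ∀ n, φ (M + n) + ε * ∑ i ∈ Finset.range n, α (M + i) ≤ φ M := by
      intro n
      induction n with
      | zero => simp
      | succ n ih =>
        have := step (M + n) (Nat.le_add_right _ _)
        rw [Finset.sum_range_succ]
        have : φ (M + (n + 1)) ≤ φ (M + n) - ε * α (M + n) := by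
          rw [← Nat.add_assoc]; exact this
        nlinarith
    have hbd : ∀ n, ∑ i ∈ Finset.range n, α (M + i) ≤ φ M / ε := by
      intro n
      have h0 := hφ (M + n)
      have := sum n
      rw [le_div_iff₀ hε, mul_comm]
      linarith
    have hT : Filter.Tendsto (fun n => ∑ i ∈ Finset.range n, α (M + i))
        Filter.atTop Filter.atTop := by
      have heq : ∀ n, ∑ i ∈ Finset.range n, α (M + i)
          = (∑ k ∈ Finset.range (M + n), α k) - ∑ k ∈ Finset.range M, α k := by
        intro n
        rw [Finset.sum_range_add]
        ring
      simp only [heq]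
      apply Filter.tendsto_atTop_add_const_right
      have hMn : Filter.Tendsto (fun n => M + n) Filter.atTop Filter.atTop := by
        simpa [Nat.add_comm] using Filter.tendsto_add_atTop_nat M
      exact hdiv.comp hMn
    obtain ⟨n, hn⟩ := (hT.eventually_ge_atTop (φ M / ε + 1)).exists
    linarith [hbd n]
  have hbelow : ∀ᶠ k in Filter.atTop, (0 : ℝ) ≤ ψ k := Filter.Eventually.of_forall hψ
  have hcobdd : Filter.IsCoboundedUnder (· ≥ ·) Filter.atTop ψ :=
    Filter.IsCoboundedUnder.of_frequently_le (key 1 one_pos)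
  have hbdd : Filter.IsBoundedUnder (· ≥ ·) Filter.atTop ψ :=
    Filter.isBoundedUnder_of ⟨0, fun k => hψ k⟩
  refine le_antisymm ?_ ?_
  · apply le_of_forall_pos_le_add
    intro ε hε
    have := Filter.liminf_le_of_frequently_le (key ε hε) hbdd
    linarith
  · exact Filter.le_liminf_of_le hcobdd hbelow
end
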